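/- Let n ≥ 4, let b_l, b_m be distinct basis vectors, and let g be an automorphism of G(V) with g(b_l) = b_m and g(b_m) = b_l. If u is the vertex with support equal to the basis minus {b_l} and v is the vertex with support equal to the basis minus {b_m}, then g(u) = v. -/

import Mathlib

open Finset

/-- Vertices of the non-zero component graph: nonzero vectors of `V = (Fin n → ZMod 2)`. -/
abbrev Vtx (n : ℕ) := {v : Fin n → ZMod 2 // v ≠ 0}

/-- The support (skeleton) of a vector: basis vectors with nonzero coefficient. -/
def supp {n : ℕ} (v : Fin n → ZMod 2) : Finset (Fin n) :=
  Finset.univ.filter (fun i => v i ≠ 0)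

/-- The non-zero component graph of an `n`-dimensional vector space over `F_2`:
two distinct nonzero vectors are adjacent iff their supports intersect. -/
def NZC (n : ℕ) : SimpleGraph (Vtx n) where
  Adj u v := u ≠ v ∧ ∃ i, u.1 i ≠ 0 ∧ v.1 i ≠ 0
  symm := by
    constructor
    rintro u v ⟨h1, i, h2, h3⟩
    exact ⟨h1.symm, i, h3, h2⟩
  loopless := by
    constructor
    rintro u ⟨h, -⟩
    exact h rfl

lemma mem_supp {n : ℕ} {v : Fin n → ZMod 2} {i : Fin n} : i ∈ supp v ↔ v i ≠ 0 := by
  simp [supp]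

lemma zmod2_cases (x : ZMod 2) : x = 0 ∨ x = 1 := by revert x; decide

lemma eq_of_supp_eq {n : ℕ} {a b : Fin n → ZMod 2} (h : supp a = supp b) : a = b := by
  funext i
  have hiff : (a i ≠ 0) ↔ (b i ≠ 0) := by rw [← mem_supp, ← mem_supp, h]
  rcases zmod2_cases (a i) with h1 | h1 <;> rcases zmod2_cases (b i) with h2 | h2 <;>
    simp_all

lemma supp_nonempty {n : ℕ} (x : Vtx n) : (supp x.1).Nonempty := by
  rcases Finset.eq_empty_or_nonempty (supp x.1) with he | hne
  · exfalso
    apply x.2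
    funext i
    have : i ∉ supp x.1 := he ▸ Finset.notMem_empty i
    rw [mem_supp] at this
    exact not_not.mp this
  · exact hne

/-- The basis (indicator) vertex with support `{i}`. -/
def evtx {n : ℕ} (i : Fin n) : Vtx n :=
  ⟨fun j => if j = i then 1 else 0, fun h => by
    have := congrFun h i
    simp at this⟩

lemma supp_evtx {n : ℕ} (i : Fin n) : supp (evtx i).1 = {i} := by
  ext j
  simp [supp, evtx]

lemma not_adj_iff {n : ℕ} (x w : Vtx n) :
    ¬ (NZC n).Adj x w ↔ (w = x ∨ supp x.1 ∩ supp w.1 = ∅) := by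
  constructor
  · intro h
    by_cases hw : w = x
    · exact Or.inl hw
    · right
      ext i
      simp only [Finset.mem_inter, mem_supp, Finset.notMem_empty, iff_false, not_and]
      intro h1 h2
      exact h ⟨fun e => hw e.symm, i, h1, h2⟩
  · rintro (rfl | h) hadj
    · exact (NZC n).loopless.irrefl _ hadj
    · obtain ⟨-, i, h1, h2⟩ := hadj
      have : i ∈ supp x.1 ∩ supp w.1 := Finset.mem_inter.2 ⟨mem_supp.2 h1, mem_supp.2 h2⟩
      rw [h] at this
      exact Finset.notMem_empty i this

lemma exists_not_mem_pair {n : ℕ} (hn : 4 ≤ n) (i m : Fin n) :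
    ∃ j : Fin n, j ≠ i ∧ j ≠ m := by
  have hcard : ({i, m} : Finset (Fin n)).card ≤ 2 := by
    apply le_trans (Finset.card_insert_le _ _)
    simp
  have : (({i, m} : Finset (Fin n))ᶜ).Nonempty := by
    rw [← Finset.card_pos, Finset.card_compl]
    have : Fintype.card (Fin n) = n := Fintype.card_fin n
    omega
  obtain ⟨j, hj⟩ := this
  rw [Finset.mem_compl, Finset.mem_insert, Finset.mem_singleton] at hj
  push_neg at hj
  exact ⟨j, hj⟩

lemma supp_eq_of_char {n : ℕ} (hn : 4 ≤ n) (m : Fin n) (bm : Vtx n)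
    (hbm : supp bm.1 = {m}) (x : Vtx n)
    (hx : ∀ w, ¬ (NZC n).Adj x w ↔ (w = x ∨ w = bm)) :
    supp x.1 = Finset.univ \ {m} := by
  -- first, x ≠ bm
  have hxm : x ≠ bm := by
    intro hx_eq
    obtain ⟨j, hji, hjm⟩ := exists_not_mem_pair hn m m
    have hna : ¬ (NZC n).Adj x (evtx j) := by
      rw [not_adj_iff]
      right
      rw [hx_eq, hbm, supp_evtx]
      simp [hjm, Ne.symm hjm]
    rcases (hx _).mp hna with h | h
    · have := congrArg (fun z : Vtx n => supp z.1) h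
      simp only [supp_evtx, hx_eq, hbm] at this
      exact hjm (Finset.singleton_injective this)
    · have := congrArg (fun z : Vtx n => supp z.1) h
      simp only [supp_evtx, hbm] at this
      exact hjm (Finset.singleton_injective this)
  -- m ∉ supp x
  have hm : m ∉ supp x.1 := by
    have hna : ¬ (NZC n).Adj x bm := (hx bm).mpr (Or.inr rfl)
    rw [not_adj_iff] at hna
    rcases hna with h | h
    · exact absurd h.symm hxm
    · intro hmem
      have : m ∈ supp x.1 ∩ supp bm.1 := by
        rw [hbm]
        exact Finset.mem_inter.2 ⟨hmem, Finset.mem_singleton_self m⟩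
      rw [h] at this
      exact Finset.notMem_empty m this
  -- every i ≠ m is in supp x
  have hi : ∀ i : Fin n, i ≠ m → i ∈ supp x.1 := by
    intro i him
    by_contra hnot
    have hna : ¬ (NZC n).Adj x (evtx i) := by
      rw [not_adj_iff]
      right
      rw [supp_evtx]
      ext j
      simp only [Finset.mem_inter, Finset.mem_singleton, Finset.notMem_empty, iff_false,
        not_and]
      rintro hj rfl
      exact hnot hj
    rcases (hx _).mp hna with h | h
    · -- supp x = {i}
      have hsx : supp x.1 = {i} := by
        rw [← h, supp_evtx]
      obtain ⟨j, hji, hjm⟩ := exists_not_mem_pair hn i m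
      have hna2 : ¬ (NZC n).Adj x (evtx j) := by
        rw [not_adj_iff]
        right
        rw [hsx, supp_evtx]
        simp [hji, Ne.symm hji]
      rcases (hx _).mp hna2 with h2 | h2
      · have := congrArg (fun z : Vtx n => supp z.1) h2
        simp only [supp_evtx, hsx] at this
        exact hji (Finset.singleton_injective this)
      · have := congrArg (fun z : Vtx n => supp z.1) h2
        simp only [supp_evtx, hbm] at this
        exact hjm (Finset.singleton_injective this)
    · have := congrArg (fun z : Vtx n => supp z.1) h
      simp only [supp_evtx, hbm] at this
      exact him (Finset.singleton_injective this)
  ext i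
  simp only [Finset.mem_sdiff, Finset.mem_univ, Finset.mem_singleton, true_and]
  constructor
  · intro hmem
    rintro rfl
    exact hm hmem
  · exact hi i

/-- If `n ≥ 4` and `g` swaps the basis vectors `b_l, b_m`, then `g` maps the vertex with
support `basis \ {b_l}` to the vertex with support `basis \ {b_m}`. -/
theorem swap_maps_cobasis (n : ℕ) (hn : 4 ≤ n) (l m : Fin n) (hlm : l ≠ m)
    (bl bm : Vtx n) (hbl : supp bl.1 = {l}) (hbm : supp bm.1 = {m})
    (g : NZC n ≃g NZC n) (h1 : g bl = bm) (h2 : g bm = bl)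
    (u v : Vtx n) (hu : supp u.1 = Finset.univ \ {l})
    (hv : supp v.1 = Finset.univ \ {m}) : g u = v := by
  -- Step A: the non-neighbours of u are exactly u and bl
  have hA : ∀ w, ¬ (NZC n).Adj u w ↔ (w = u ∨ w = bl) := by
    intro w
    rw [not_adj_iff]
    constructor
    · rintro (h | h)
      · exact Or.inl h
      · right
        have hsub : supp w.1 ⊆ {l} := by
          intro i hiw
          by_contra hil
          rw [Finset.mem_singleton] at hil
          have hiu : i ∈ supp u.1 := by
            rw [hu]
            simp [hil]
          have : i ∈ supp u.1 ∩ supp w.1 := Finset.mem_inter.2 ⟨hiu, hiw⟩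
          rw [h] at this
          exact Finset.notMem_empty i this
        have hsw : supp w.1 = {l} := by
          rcases Finset.subset_singleton_iff.mp hsub with he | he
          · exact absurd he (Finset.nonempty_iff_ne_empty.mp (supp_nonempty w))
          · exact he
        exact Subtype.ext (eq_of_supp_eq (hsw.trans hbl.symm))
    · rintro (rfl | rfl)
      · exact Or.inl rfl
      · right
        rw [hu, hbl]
        ext i
        simp only [Finset.mem_inter, Finset.mem_sdiff, Finset.mem_univ, Finset.mem_singleton,
          true_and, Finset.notMem_empty, iff_false, not_and]
        intro hil hl
        exact hil hl
  -- Step B: transfer via g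
  have hB : ∀ w, ¬ (NZC n).Adj (g u) w ↔ (w = g u ∨ w = bm) := by
    intro w
    have key : (NZC n).Adj (g u) w ↔ (NZC n).Adj u (g.symm w) := by
      conv_lhs => rw [← g.apply_symm_apply w]
      exact g.map_rel_iff
    rw [key, hA]
    constructor
    · rintro (h | h)
      · left
        have := congrArg g h
        rwa [g.apply_symm_apply] at this
      · right
        have := congrArg g h
        rw [g.apply_symm_apply, h1] at this
        exact this
    · rintro (rfl | rfl)
      · left; exact g.symm_apply_apply u
      · right
        rw [← h1, g.symm_apply_apply]
  have hsupp : supp (g u).1 = Finset.univ \ {m} := supp_eq_of_char hn m bm hbm (g u) hB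
  exact Subtype.ext (eq_of_supp_eq (hsupp.trans hv.symm))
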